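/- arXiv:1208.1808 — 2 statements merged into one kernel-verified Lean document; each statement's English description precedes it below -/
import Mathlib

section
/- Let f : (0,∞) → ℂ be continuous. Assume: (a) for every N > 0 there exist finitely many coefficients a_1,…,a_m ∈ ℂ, exponents z_1,…,z_m ∈ ℂ, powers p_1,…,p_m ∈ ℕ and a constant C > 0 such that |f(t) − Σ_{i=1}^m a_i t^{z_i} (log t)^{p_i}| ≤ C t^N for all t ∈ (0,1]; and (b) for every N > 0 there exist finitely many b_1,…,b_l ∈ ℂ, w_1,…,w_l ∈ ℂ, q_1,…,q_l ∈ ℕ and C' > 0 such that |f(t) − Σ_{j=1}^l b_j t^{−w_j} (log t)^{q_j}| ≤ C' t^{−N} for all t ∈ [1,∞). Then there exist a real number A and functions Z_0, Z_∞ : ℂ → ℂ, each meromorphic on all of ℂ, such that Z_0(s) = ∫_0^1 f(t) t^{s−1} dt whenever Re s > A, and Z_∞(s) = ∫_1^∞ f(t) t^{s−1} dt whenever Re s < −A. -/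
open MeasureTheory Set Filter Real Complex

-- norm of t^z * (log t)^p for t > 0
lemma norm_cpow_log {t : ℝ} (ht : 0 < t) (z : ℂ) (p : ℕ) :
    ‖(t : ℂ) ^ z * ((Real.log t : ℂ)) ^ p‖ = t ^ z.re * |Real.log t| ^ p := by
  rw [norm_mul, norm_pow, Complex.norm_cpow_eq_rpow_re_of_pos ht, Complex.norm_real,
    Real.norm_eq_abs]

-- |log t| ≤ t^(-δ)/δ on (0,1]
lemma abs_log_le {t δ : ℝ} (ht : t ∈ Ioc (0:ℝ) 1) (hδ : 0 < δ) :
    |Real.log t| ≤ t ^ (-δ) / δ := by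
  obtain ⟨ht0, ht1⟩ := ht
  rw [abs_of_nonpos (Real.log_nonpos ht0.le ht1), ← Real.log_inv]
  calc Real.log t⁻¹ ≤ t⁻¹ ^ δ / δ := Real.log_le_rpow_div (by positivity) hδ
    _ = t ^ (-δ) / δ := by rw [Real.inv_rpow ht0.le, ← Real.rpow_neg ht0.le]

lemma contOn_cpow_log (z : ℂ) (p : ℕ) :
    ContinuousOn (fun t : ℝ => (t : ℂ) ^ z * ((Real.log t : ℂ)) ^ p) (Ioi 0) := by
  intro t ht
  have ht0 : (0:ℝ) < t := ht
  apply ContinuousAt.continuousWithinAt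
  exact (Complex.continuousAt_ofReal_cpow_const t z (Or.inr ht0.ne')).mul
    ((Complex.continuous_ofReal.continuousAt.comp (Real.continuousAt_log ht0.ne')).pow p)

lemma integrable_aux {g : ℝ → ℂ} (hgm : AEStronglyMeasurable g (volume.restrict (Ioc 0 1)))
    {c N : ℝ} (hN : -1 < N)
    (hbound : ∀ t ∈ Ioc (0:ℝ) 1, ‖g t‖ ≤ c * t ^ N) : IntegrableOn g (Ioc 0 1) := by
  have hb : IntegrableOn (fun t : ℝ => c * t ^ N) (Ioc 0 1) := by
    rw [integrableOn_Ioc_iff_integrableOn_Ioo]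
    exact ((intervalIntegral.integrableOn_Ioo_rpow_iff one_pos).2 hN).const_mul c
  exact hb.integrable.mono' hgm ((ae_restrict_iff' measurableSet_Ioc).2 (ae_of_all _ hbound))

-- pointwise bound used repeatedly
lemma term_bound {w : ℂ} (hw : 0 < w.re) (p : ℕ) :
    ∃ c : ℝ, 0 ≤ c ∧ ∀ t ∈ Ioc (0:ℝ) 1,
      ‖(t : ℂ) ^ (w - 1) * ((Real.log t : ℂ)) ^ p‖ ≤ c * t ^ (w.re / 2 - 1) := by
  set δ : ℝ := w.re / (2 * (p + 1)) with hδdef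
  have hδ : 0 < δ := by positivity
  refine ⟨(1/δ) ^ p, by positivity, fun t ht => ?_⟩
  obtain ⟨ht0, ht1⟩ := ht
  rw [norm_cpow_log ht0 (w - 1) p]
  have h1 : |Real.log t| ^ p ≤ (t ^ (-δ) / δ) ^ p :=
    pow_le_pow_left₀ (abs_nonneg _) (abs_log_le ⟨ht0, ht1⟩ hδ) p
  have h2 : (t ^ (-δ) / δ) ^ p = (1/δ)^p * t ^ (-δ * p) := by
    rw [div_pow, ← Real.rpow_natCast (t ^ (-δ)) p, ← Real.rpow_mul ht0.le]
    ring
  have h3 : (w - 1).re = w.re - 1 := by simp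
  calc t ^ (w - 1).re * |Real.log t| ^ p ≤ t ^ (w.re - 1) * ((1/δ)^p * t ^ (-δ * p)) := by
        rw [h3]; exact mul_le_mul_of_nonneg_left (h1.trans_eq h2) (Real.rpow_nonneg ht0.le _)
    _ = (1/δ)^p * t ^ (w.re - 1 + (-δ * p)) := by
        rw [Real.rpow_add ht0]; ring
    _ ≤ (1/δ)^p * t ^ (w.re / 2 - 1) := by
        apply mul_le_mul_of_nonneg_left _ (by positivity)
        apply Real.rpow_le_rpow_of_exponent_ge ht0 ht1
        have : δ * p ≤ w.re / 2 := by
          rw [hδdef, div_mul_eq_mul_div, div_le_div_iff₀ (by positivity) (by norm_num)]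
          nlinarith [hw]
        linarith
    _ = _ := rfl

lemma integrableOn_cpow_log {w : ℂ} (hw : 0 < w.re) (p : ℕ) :
    IntegrableOn (fun t : ℝ => (t : ℂ) ^ (w - 1) * ((Real.log t : ℂ)) ^ p) (Ioc 0 1) := by
  obtain ⟨c, hc0, hc⟩ := term_bound hw p
  exact integrable_aux (((contOn_cpow_log (w-1) p).mono Ioc_subset_Ioi_self).aestronglyMeasurable
    measurableSet_Ioc) (by linarith [hw] : (-1:ℝ) < w.re / 2 - 1) hc

lemma hasDerivAt_logpow (p : ℕ) {t : ℝ} (ht : 0 < t) :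
    HasDerivAt (fun u : ℝ => ((Real.log u : ℂ)) ^ p)
      (p * ((Real.log t : ℂ)) ^ (p - 1) * ((t : ℂ))⁻¹) t := by
  have hl : HasDerivAt (fun u : ℝ => ((Real.log u : ℂ))) (((t : ℂ))⁻¹) t := by
    have := (Real.hasDerivAt_log ht.ne').ofReal_comp
    simpa [Complex.ofReal_inv] using this
  induction p with
  | zero => simpa using hasDerivAt_const t (1 : ℂ)
  | succ p ih =>
    have h : HasDerivAt (fun u : ℝ => ((Real.log u : ℂ)) ^ p * ((Real.log u : ℂ))) _ t := ih.mul hl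
    have heq : (fun u : ℝ => ((Real.log u : ℂ)) ^ p * ((Real.log u : ℂ)))
        = fun u : ℝ => ((Real.log u : ℂ)) ^ (p + 1) := by
      funext u; rw [← pow_succ]
    rw [heq] at h
    convert h using 1
    rcases Nat.eq_zero_or_pos p with hp | hp
    · subst hp; simp
    · have e3 : ((Real.log t : ℂ)) ^ (p - 1) * ((Real.log t : ℂ)) = ((Real.log t : ℂ)) ^ p := by
        rw [← pow_succ]; congr 1; omega
      simp only [Nat.add_sub_cancel]
      rw [← e3]
      push_cast
      ring

lemma hasDerivAt_cpow_log {w : ℂ} (hw : 0 < w.re) (p : ℕ) {t : ℝ} (ht : 0 < t) :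
    HasDerivAt (fun u : ℝ => (u : ℂ) ^ w * ((Real.log u : ℂ)) ^ p)
      ((t : ℂ) ^ (w - 1) * (w * ((Real.log t : ℂ)) ^ p
        + p * ((Real.log t : ℂ)) ^ (p - 1))) t := by
  have hw0 : w ≠ 0 := fun h => by simp [h] at hw
  have h1 : HasDerivAt (fun u : ℝ => (u : ℂ) ^ w) (w * (t : ℂ) ^ (w - 1)) t := by
    exact hasDerivAt_ofReal_cpow_const ht.ne' hw0
  have h3 : HasDerivAt (fun u : ℝ => (u : ℂ) ^ w * ((Real.log u : ℂ)) ^ p) _ t :=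
    h1.mul (hasDerivAt_logpow p ht)
  convert h3 using 1
  have hkey : (t : ℂ) ^ (w - 1) = (t : ℂ) ^ w * ((t : ℂ))⁻¹ := by
    rw [Complex.cpow_sub _ _ (by exact_mod_cast ht.ne'), Complex.cpow_one, div_eq_mul_inv]
  rw [hkey]; ring

open Topology in
lemma key_identity {w : ℂ} (hw : 0 < w.re) (p : ℕ) :
    w * (∫ t in Ioc (0:ℝ) 1, (t : ℂ) ^ (w - 1) * ((Real.log t : ℂ)) ^ p)
      + p * (∫ t in Ioc (0:ℝ) 1, (t : ℂ) ^ (w - 1) * ((Real.log t : ℂ)) ^ (p - 1))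
      = (if p = 0 then 1 else 0) := by
  set g : ℝ → ℂ := fun t => w * ((t : ℂ) ^ (w - 1) * ((Real.log t : ℂ)) ^ p)
    + (p : ℂ) * ((t : ℂ) ^ (w - 1) * ((Real.log t : ℂ)) ^ (p - 1)) with hg
  set G : ℝ → ℂ := fun u => (u : ℂ) ^ w * ((Real.log u : ℂ)) ^ p with hG
  have int1 := integrableOn_cpow_log hw p
  have int2 := integrableOn_cpow_log hw (p - 1)
  have intg : IntegrableOn g (Ioc 0 1) := (int1.const_mul w).add (int2.const_mul p)
  set ε : ℕ → ℝ := fun n => 1 / (n + 2) with hε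
  have hε0 : ∀ n, 0 < ε n := fun n => by positivity
  have hε1 : ∀ n, ε n ≤ 1 := fun n => by
    rw [hε]; rw [div_le_one (by positivity)]; push_cast; linarith
  have hUnion : (⋃ n, Ioc (ε n) 1) = Ioc (0:ℝ) 1 := by
    ext t
    simp only [mem_iUnion, mem_Ioc]
    constructor
    · rintro ⟨n, h1, h2⟩; exact ⟨(hε0 n).trans h1, h2⟩
    · rintro ⟨h1, h2⟩
      obtain ⟨n, hn⟩ := exists_nat_one_div_lt h1
      refine ⟨n, lt_of_le_of_lt ?_ hn, h2⟩
      apply div_le_div_of_nonneg_left one_pos.le (by positivity)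
      push_cast; linarith
  have hmono : Monotone fun n => Ioc (ε n) 1 := by
    intro a b hab
    apply Ioc_subset_Ioc_left
    apply div_le_div_of_nonneg_left one_pos.le (by positivity)
    have : (a:ℝ) ≤ b := Nat.cast_le.2 hab
    linarith
  have hlim1 : Tendsto (fun n => ∫ t in Ioc (ε n) 1, g t) atTop
      (𝓝 (∫ t in Ioc (0:ℝ) 1, g t)) := by
    have := tendsto_setIntegral_of_monotone (fun n : ℕ => measurableSet_Ioc) hmono
      (by rw [hUnion]; exact intg)
    rwa [hUnion] at this
  have hgderiv : ∀ x : ℝ, 0 < x → HasDerivAt G (g x) x := by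
    intro x hx
    have := hasDerivAt_cpow_log hw p hx
    convert this using 1
    rw [hg]; ring
  have hgcont : ContinuousOn g (Ioi 0) :=
    (continuousOn_const.mul (contOn_cpow_log (w - 1) p)).add
      (continuousOn_const.mul (contOn_cpow_log (w - 1) (p - 1)))
  have hFTC : ∀ n, ∫ t in Ioc (ε n) 1, g t = G 1 - G (ε n) := by
    intro n
    rw [← intervalIntegral.integral_of_le (hε1 n)]
    apply intervalIntegral.integral_eq_sub_of_hasDerivAt
    · intro x hx
      rw [uIcc_of_le (hε1 n)] at hx
      exact hgderiv x ((hε0 n).trans_le hx.1)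
    · apply ContinuousOn.intervalIntegrable
      rw [uIcc_of_le (hε1 n)]
      exact hgcont.mono fun x hx => (hε0 n).trans_le hx.1
  have hG0 : Tendsto (fun n => G (ε n)) atTop (𝓝 0) := by
    obtain ⟨c, hc0, hc⟩ := term_bound hw p
    have hbound : ∀ n, ‖G (ε n)‖ ≤ c * (ε n) ^ (w.re / 2) := by
      intro n
      have h1 := hc (ε n) ⟨hε0 n, hε1 n⟩
      have e1 : ‖G (ε n)‖ = (ε n) * ‖((ε n : ℝ) : ℂ) ^ (w - 1) * ((Real.log (ε n) : ℂ)) ^ p‖ := by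
        rw [hG, norm_cpow_log (hε0 n) w p, norm_cpow_log (hε0 n) (w - 1) p]
        have : (ε n) ^ w.re = (ε n) ^ ((1:ℝ) + (w - 1).re) := by norm_num
        rw [this, Real.rpow_add (hε0 n), Real.rpow_one, mul_assoc]
      rw [e1]
      calc (ε n) * ‖((ε n : ℝ) : ℂ) ^ (w - 1) * ((Real.log (ε n) : ℂ)) ^ p‖
          ≤ (ε n) * (c * (ε n) ^ (w.re / 2 - 1)) :=
            mul_le_mul_of_nonneg_left h1 (hε0 n).le
        _ = c * (ε n) ^ (w.re / 2) := by
            rw [show w.re / 2 = 1 + (w.re / 2 - 1) by ring, Real.rpow_add (hε0 n),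
              Real.rpow_one]
            ring
    apply squeeze_zero_norm hbound
    have hεlim : Tendsto ε atTop (𝓝 0) := by
      have h := tendsto_one_div_add_atTop_nhds_zero_nat (𝕜 := ℝ)
      apply squeeze_zero (fun n => (hε0 n).le) _ h
      intro n
      apply div_le_div_of_nonneg_left one_pos.le (by positivity)
      push_cast; linarith
    have hx : Tendsto (fun x : ℝ => x ^ (w.re / 2)) (𝓝 0) (𝓝 0) := by
      have := (Real.continuousAt_rpow_const 0 (w.re / 2) (Or.inr (by linarith))).tendsto
      rwa [Real.zero_rpow (by positivity : w.re / 2 ≠ 0)] at this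
    have := (hx.comp hεlim).const_mul c
    simpa using this
  have hlim2 : Tendsto (fun n => ∫ t in Ioc (ε n) 1, g t) atTop (𝓝 (G 1)) := by
    simp only [hFTC]
    have : Tendsto (fun n => G 1 - G (ε n)) atTop (𝓝 (G 1 - 0)) :=
      tendsto_const_nhds.sub hG0
    simpa using this
  have hint : ∫ t in Ioc (0:ℝ) 1, g t = G 1 := tendsto_nhds_unique hlim1 hlim2
  have hsplit : ∫ t in Ioc (0:ℝ) 1, g t
      = w * (∫ t in Ioc (0:ℝ) 1, (t : ℂ) ^ (w - 1) * ((Real.log t : ℂ)) ^ p)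
        + p * (∫ t in Ioc (0:ℝ) 1, (t : ℂ) ^ (w - 1) * ((Real.log t : ℂ)) ^ (p - 1)) := by
    rw [hg, integral_add (int1.const_mul w) (int2.const_mul p),
      MeasureTheory.integral_const_mul, MeasureTheory.integral_const_mul]
  have hG1 : G 1 = (if p = 0 then 1 else 0) := by
    rw [hG]
    simp only [Complex.ofReal_one, Complex.one_cpow, Real.log_one, Complex.ofReal_zero, one_mul]
    cases p with
    | zero => simp
    | succ k => simp
  rw [← hsplit, hint, hG1]

lemma cpow_log_integral_formula {w : ℂ} (hw : 0 < w.re) (p : ℕ) :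
    ∫ t in Ioc (0:ℝ) 1, (t : ℂ) ^ (w - 1) * ((Real.log t : ℂ)) ^ p
      = (-1 : ℂ) ^ p * (p.factorial) / w ^ (p + 1) := by
  have hw0 : w ≠ 0 := fun h => by simp [h] at hw
  induction p with
  | zero =>
    have h := key_identity hw 0
    simp only [if_pos rfl, pow_zero, Nat.cast_zero, zero_mul, add_zero, mul_one, if_true] at h
    simp only [pow_zero, Nat.factorial_zero, Nat.cast_one, pow_one, mul_one, one_mul]
    field_simp
    linear_combination h
  | succ k ih =>
    have hk := key_identity hw (k + 1)
    simp only [Nat.add_sub_cancel, if_neg (Nat.succ_ne_zero k)] at hk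
    rw [ih] at hk
    have : (∫ t in Ioc (0:ℝ) 1, (t : ℂ) ^ (w - 1) * ((Real.log t : ℂ)) ^ (k + 1))
        = -(k + 1) * ((-1 : ℂ) ^ k * (k.factorial) / w ^ (k + 1)) / w := by
      field_simp at hk ⊢
      push_cast at hk ⊢; linear_combination hk
    rw [this, Nat.factorial_succ]
    push_cast
    field_simp
    ring

open Topology

lemma mellin_indicator_eq (h : ℝ → ℂ) (s : ℂ) :
    mellin ((Ioc (0:ℝ) 1).indicator h) s = ∫ t in Ioc (0:ℝ) 1, (t : ℂ) ^ (s - 1) * h t := by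
  rw [mellin]
  have : (fun t : ℝ => (t : ℂ) ^ (s - 1) • (Ioc (0:ℝ) 1).indicator h t)
      = (Ioc (0:ℝ) 1).indicator (fun t : ℝ => (t : ℂ) ^ (s - 1) • h t) := by
    rw [indicator_smul (Ioc (0:ℝ) 1) (fun t : ℝ => (t : ℂ) ^ (s - 1)) h]
  rw [this, setIntegral_indicator measurableSet_Ioc]
  have : Ioi (0:ℝ) ∩ Ioc 0 1 = Ioc 0 1 := by
    rw [inter_eq_right]; exact Ioc_subset_Ioi_self
  rw [this]
  simp [smul_eq_mul]

lemma remainder_integrableOn {h : ℝ → ℂ} (hc : ContinuousOn h (Ioi 0)) {C N : ℝ}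
    (hN : 0 < N) (hb : ∀ t ∈ Ioc (0:ℝ) 1, ‖h t‖ ≤ C * t ^ N) :
    IntegrableOn ((Ioc (0:ℝ) 1).indicator h) (Ioi 0) := by
  have hsplit : Ioi (0:ℝ) = Ioc 0 1 ∪ Ioi 1 := by
    ext t; simp only [mem_Ioi, mem_union, mem_Ioc]
    constructor
    · intro ht; rcases le_or_gt t 1 with h1 | h1
      · exact Or.inl ⟨ht, h1⟩
      · exact Or.inr h1
    · rintro (⟨ht, _⟩ | ht); exacts [ht, lt_trans one_pos ht]
  rw [hsplit]
  apply IntegrableOn.union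
  · apply integrable_aux
    · exact (((hc.mono Ioc_subset_Ioi_self).aestronglyMeasurable
        measurableSet_Ioc).indicator measurableSet_Ioc)
    · exact neg_one_lt_zero.trans hN
    · intro t ht
      rw [indicator_of_mem ht]
      exact hb t ht
  · have hz : IntegrableOn (fun _ : ℝ => (0:ℂ)) (Ioi 1) := integrableOn_zero
    apply hz.congr_fun _ measurableSet_Ioi
    intro t ht
    symm
    simp only [indicator_apply_eq_zero]
    intro habs
    exact absurd habs.2 (not_le.2 ht)

lemma mellin_remainder_analytic {h : ℝ → ℂ} (hc : ContinuousOn h (Ioi 0)) {C N : ℝ}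
    (hN : 0 < N) (hb : ∀ t ∈ Ioc (0:ℝ) 1, ‖h t‖ ≤ C * t ^ N) :
    AnalyticOnNhd ℂ (mellin ((Ioc (0:ℝ) 1).indicator h)) {s : ℂ | -N < s.re} := by
  set r := (Ioc (0:ℝ) 1).indicator h with hr
  apply DifferentiableOn.analyticOnNhd _ (isOpen_lt continuous_const Complex.continuous_re)
  intro s hs
  apply DifferentiableAt.differentiableWithinAt
  apply mellin_differentiableAt_of_isBigO_rpow (a := s.re + 1) (b := -N)
    (remainder_integrableOn hc hN hb).locallyIntegrableOn
  · -- O at top : eventually zero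
    have hev : r =ᶠ[atTop] (fun _ => (0:ℂ)) := by
      filter_upwards [eventually_gt_atTop (1:ℝ)] with t ht
      simp only [hr, indicator_apply_eq_zero]
      intro habs
      exact absurd habs.2 (not_le.2 ht)
    exact hev.trans_isBigO (Asymptotics.isBigO_zero _ _)
  · exact lt_add_one s.re
  · -- O at 0
    rw [Asymptotics.isBigO_iff]
    refine ⟨|C|, ?_⟩
    filter_upwards [Ioo_mem_nhdsGT_of_mem (Set.mem_Ico.2 ⟨le_refl (0:ℝ), one_pos⟩)] with t ht
    have ht' : t ∈ Ioc (0:ℝ) 1 := ⟨ht.1, ht.2.le⟩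
    rw [indicator_of_mem ht']
    calc ‖h t‖ ≤ C * t ^ N := hb t ht'
      _ ≤ |C| * t ^ N := by
          apply mul_le_mul_of_nonneg_right (le_abs_self C) (Real.rpow_nonneg ht.1.le N)
      _ = |C| * ‖t ^ (-(-N))‖ := by
          rw [neg_neg, Real.norm_eq_abs, _root_.abs_of_nonneg (Real.rpow_nonneg ht.1.le N)]
  · simpa using hs

/-- Identity principle for meromorphic functions on a preconnected open set:
if they agree on a nonempty open subset, they agree near every point
(away from the point itself). -/
lemma meromorphic_eq_on_punctured {F G : ℂ → ℂ} {U V : Set ℂ}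
    (hU : IsOpen U) (hUc : IsPreconnected U)
    (hF : MeromorphicOn F U) (hG : MeromorphicOn G U)
    (hV : IsOpen V) (hVne : V.Nonempty) (hVU : V ⊆ U) (heq : EqOn F G V) :
    ∀ x ∈ U, F =ᶠ[𝓝[≠] x] G := by
  set S : Set ℂ := {x | F =ᶠ[𝓝[≠] x] G} with hS
  have hSopen : IsOpen S := by
    rw [isOpen_iff_mem_nhds]
    intro x hx
    have hx' : F =ᶠ[𝓝[≠] x] G := hx
    rw [eventuallyEq_iff_exists_mem] at hx'
    replace hx := hx'
    obtain ⟨W, hW, hWeq⟩ := hx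
    rw [mem_nhdsWithin] at hW
    obtain ⟨T, hTopen, hxT, hTW⟩ := hW
    apply Filter.mem_of_superset (hTopen.mem_nhds hxT)
    intro y hy
    rcases eq_or_ne y x with rfl | hyx
    · rw [hS]; exact mem_setOf.2 (eventuallyEq_iff_exists_mem.2 ⟨W, mem_nhdsWithin.2 ⟨T, hTopen, hy, hTW⟩, hWeq⟩)
    · rw [hS, mem_setOf]
      have hmem : T \ {x} ∈ 𝓝[≠] y := by
        apply mem_nhdsWithin.2
        refine ⟨T \ {x}, hTopen.sdiff isClosed_singleton, ⟨hy, hyx⟩, ?_⟩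
        intro z hz; exact hz.1
      filter_upwards [hmem] with z hz
      exact hWeq (hTW ⟨hz.1, hz.2⟩)
  have hclosure : closure S ∩ U ⊆ S := by
    rintro x ⟨hxc, hxU⟩
    obtain ⟨n, hn⟩ := (hF x hxU).sub (hG x hxU)
    rcases hn.eventually_eq_zero_or_eventually_ne_zero with hzero | hne
    · -- F = G near x (punctured)
      rw [hS, mem_setOf]
      have : ∀ᶠ z in 𝓝[≠] x, (z - x) ^ n • (F z - G z) = 0 :=
        eventually_nhdsWithin_of_eventually_nhds hzero
      filter_upwards [this, self_mem_nhdsWithin] with z hz hz'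
      have hzx : z - x ≠ 0 := sub_ne_zero.2 hz'
      have : (z - x) ^ n * (F z - G z) = 0 := by
        simpa [Pi.sub_apply, smul_eq_mul] using hz
      rw [mul_eq_zero] at this
      rcases this with h1 | h1
      · exact absurd h1 (pow_ne_zero n hzx)
      · exact sub_eq_zero.1 h1
    · -- impossible since x ∈ closure S, unless x ∈ S
      by_cases hxS : x ∈ S
      · exact hxS
      exfalso
      have hne' : ∀ᶠ z in 𝓝[≠] x, F z ≠ G z := by
        filter_upwards [hne] with z hz
        intro habs
        apply hz
        simp [Pi.sub_apply, habs]
      rw [eventually_iff_exists_mem] at hne'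
      obtain ⟨W, hW, hWne⟩ := hne'
      rw [mem_nhdsWithin] at hW
      obtain ⟨T, hTopen, hxT, hTW⟩ := hW
      -- find a point of S in T other than x
      have : (S ∩ T).Nonempty := by
        rw [_root_.mem_closure_iff] at hxc
        exact (hxc T hTopen hxT).imp fun y hy => ⟨hy.2, hy.1⟩
      obtain ⟨y, hyS, hyT⟩ := this
      have hyx : y ≠ x := fun h => hxS (h ▸ hyS)
      -- F = G on a punctured neighborhood of y
      rw [hS, mem_setOf, eventuallyEq_iff_exists_mem] at hyS
      obtain ⟨W', hW', hW'eq⟩ := hyS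
      rw [mem_nhdsWithin] at hW'
      obtain ⟨R, hRopen, hyR, hRW'⟩ := hW'
      -- pick z ∈ R ∩ T, z ≠ y, z ≠ x
      obtain ⟨ε, hε, hball⟩ := Metric.isOpen_iff.1 (hRopen.inter hTopen) y ⟨hyR, hyT⟩
      set d := min (ε / 2) (dist x y / 2) with hd
      have hd0 : 0 < d := by
        apply lt_min (by linarith)
        have : 0 < dist x y := dist_pos.2 (Ne.symm hyx)
        linarith
      set z := y + d with hz
      have hzy : z ≠ y := by
        simp only [hz, ne_eq, add_eq_left]
        exact_mod_cast hd0.ne'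
      have hdzy : dist z y = d := by
        rw [hz, dist_eq_norm, add_sub_cancel_left, Complex.norm_real, Real.norm_eq_abs,
          _root_.abs_of_pos hd0]
      have hzball : z ∈ R ∩ T := by
        apply hball
        rw [Metric.mem_ball, hdzy]
        calc d ≤ ε / 2 := min_le_left _ _
          _ < ε := by linarith
      have hzx : z ≠ x := by
        intro habs
        have h1 : dist x y = d := by rw [← habs, hdzy]
        have h2 : d ≤ dist x y / 2 := min_le_right _ _
        rw [h1] at h2
        linarith
      have h1 : F z = G z := hW'eq (hRW' ⟨hzball.1, hzy⟩)
      have h2 : F z ≠ G z := hWne z (hTW ⟨hzball.2, hzx⟩)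
      exact h2 h1
  have hSne : (U ∩ S).Nonempty := by
    obtain ⟨v, hv⟩ := hVne
    refine ⟨v, hVU hv, ?_⟩
    rw [hS, mem_setOf]
    have : V ∈ 𝓝[≠] v := nhdsWithin_le_nhds (hV.mem_nhds hv)
    filter_upwards [this] with z hz
    exact heq hz
  intro x hx
  exact hUc.subset_of_closure_inter_subset hSopen hSne hclosure hx

lemma meromorphicAt_comp_neg {W : ℂ → ℂ} {x : ℂ} (hW : MeromorphicAt W (-x)) :
    MeromorphicAt (fun s => W (-s)) x := by
  obtain ⟨n, hn⟩ := hW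
  refine ⟨n, ?_⟩
  have hneg : AnalyticAt ℂ (fun s : ℂ => -s) x := analyticAt_id.neg
  have hcomp : AnalyticAt ℂ (fun s : ℂ => (-s - -x) ^ n • W (-s)) x := by
    have := hn.comp (x := x) (by simpa using hneg)
    simpa [Function.comp_def] using this
  have hcomp' : AnalyticAt ℂ (fun s : ℂ => (-s - -x) ^ n * W (-s)) x := by
    simpa [smul_eq_mul] using hcomp
  have h2 : AnalyticAt ℂ (fun s : ℂ => ((-1 : ℂ) ^ n) * ((-s - -x) ^ n * W (-s))) x :=
    analyticAt_const.mul hcomp'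
  apply h2.congr
  apply Filter.Eventually.of_forall
  intro s
  have key : (-1 : ℂ) ^ n * (-s - -x) ^ n = (s - x) ^ n := by
    rw [← mul_pow, show ((-1 : ℂ)) * (-s - -x) = s - x by ring]
  simp only [smul_eq_mul]
  rw [← mul_assoc, key]

lemma meromorphicOn_comp_neg {W : ℂ → ℂ} (hW : MeromorphicOn W univ) :
    MeromorphicOn (fun s => W (-s)) univ := fun x _ =>
  meromorphicAt_comp_neg (hW (-x) (mem_univ _))

lemma meromorphicOn_ratl (c z : ℂ) (k : ℕ) :
    MeromorphicOn (fun s : ℂ => c / (s + z) ^ k) univ := by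
  apply MeromorphicOn.div
  · exact fun x _ => (analyticAt_const (v := c)).meromorphicAt
  · intro x _
    exact ((analyticAt_id.add analyticAt_const).pow k).meromorphicAt

lemma meromorphicOn_ratl_sum {m : ℕ} (a z : Fin m → ℂ) (p : Fin m → ℕ) :
    MeromorphicOn
      (fun s : ℂ => ∑ i, a i * ((-1 : ℂ) ^ (p i) * ((p i).factorial) / (s + z i) ^ (p i + 1)))
      univ := by
  induction m with
  | zero => simpa using MeromorphicOn.const (0:ℂ) (U := (univ : Set ℂ))
  | succ k ih =>
    have : (fun s : ℂ => ∑ i, a i * ((-1 : ℂ) ^ (p i) * ((p i).factorial) / (s + z i) ^ (p i + 1)))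
        = fun s : ℂ => (∑ i : Fin k, a (Fin.castSucc i) * ((-1 : ℂ) ^ (p (Fin.castSucc i))
            * ((p (Fin.castSucc i)).factorial) / (s + z (Fin.castSucc i)) ^ (p (Fin.castSucc i) + 1)))
          + a (Fin.last k) * ((-1 : ℂ) ^ (p (Fin.last k)) * ((p (Fin.last k)).factorial)
            / (s + z (Fin.last k)) ^ (p (Fin.last k) + 1)) := by
      funext s
      exact Fin.sum_univ_castSucc _
    rw [this]
    apply MeromorphicOn.add
    · exact ih _ _ _
    · have := (meromorphicOn_ratl (a (Fin.last k) * ((-1 : ℂ) ^ (p (Fin.last k))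
        * ((p (Fin.last k)).factorial))) (z (Fin.last k)) (p (Fin.last k) + 1))
      have heq : (fun s : ℂ => a (Fin.last k) * ((-1 : ℂ) ^ (p (Fin.last k))
          * ((p (Fin.last k)).factorial)) / (s + z (Fin.last k)) ^ (p (Fin.last k) + 1))
          = fun s : ℂ => a (Fin.last k) * ((-1 : ℂ) ^ (p (Fin.last k))
          * ((p (Fin.last k)).factorial) / (s + z (Fin.last k)) ^ (p (Fin.last k) + 1)) := by
        funext s; ring
      rw [← heq]
      exact this

lemma mellin_zero_side (f : ℝ → ℂ) (hf : ContinuousOn f (Ioi 0))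
    (hzero : ∀ N : ℝ, 0 < N → ∃ (m : ℕ) (a : Fin m → ℂ) (z : Fin m → ℂ)
      (p : Fin m → ℕ) (C : ℝ), 0 < C ∧ ∀ t ∈ Ioc (0 : ℝ) 1,
        ‖f t - ∑ i, a i * (t : ℂ) ^ (z i) * ((Real.log t : ℂ)) ^ (p i)‖ ≤ C * t ^ N) :
    ∃ (A : ℝ) (Z : ℂ → ℂ), (1 ≤ A) ∧ MeromorphicOn Z (univ : Set ℂ) ∧
      ∀ s : ℂ, A < s.re → Z s = ∫ t in Ioc (0 : ℝ) 1, f t * (t : ℂ) ^ (s - 1) := by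
  have H : ∀ n : ℕ, ∃ (m : ℕ) (a : Fin m → ℂ) (z : Fin m → ℂ)
      (p : Fin m → ℕ) (C : ℝ), 0 < C ∧ ∀ t ∈ Ioc (0 : ℝ) 1,
        ‖f t - ∑ i, a i * (t : ℂ) ^ (z i) * ((Real.log t : ℂ)) ^ (p i)‖ ≤ C * t ^ (n + 1 : ℝ) :=
    fun n => hzero (n + 1) (by positivity)
  choose m a z p C hC hb using H
  set h : ℕ → ℝ → ℂ := fun n t =>
    f t - ∑ i, a n i * (t : ℂ) ^ (z n i) * ((Real.log t : ℂ)) ^ (p n i) with hh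
  set Rt : ℕ → ℂ → ℂ := fun n s =>
    ∑ i, a n i * ((-1 : ℂ) ^ (p n i) * ((p n i).factorial) / (s + z n i) ^ (p n i + 1)) with hRt
  set Gf : ℕ → ℂ → ℂ := fun n s =>
    Rt n s + mellin ((Ioc (0:ℝ) 1).indicator (h n)) s with hGf
  set A0 : ℕ → ℝ := fun n => 1 + ∑ i, |(z n i).re| with hA0def
  have hA0 : ∀ n, 1 ≤ A0 n := fun n => by
    have : (0:ℝ) ≤ ∑ i, |(z n i).re| := Finset.sum_nonneg fun i _ => abs_nonneg _
    show (1:ℝ) ≤ 1 + ∑ i, |(z n i).re|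
    linarith
  have hzre : ∀ n (i : Fin (m n)) (s : ℂ), A0 n < s.re → 0 < (s + z n i).re := by
    intro n i s hs
    have hs' : 1 + ∑ j, |(z n j).re| < s.re := hs
    have h1 : |(z n i).re| ≤ ∑ j, |(z n j).re| :=
      Finset.single_le_sum (f := fun j => |(z n j).re|) (fun j _ => abs_nonneg _)
        (Finset.mem_univ i)
    have h2 : -(z n i).re ≤ |(z n i).re| := neg_le_abs _
    simp only [Complex.add_re]
    linarith
  have hcont_h : ∀ n, ContinuousOn (h n) (Ioi 0) := by
    intro n
    apply hf.sub
    apply continuousOn_finset_sum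
    intro i _
    exact (contOn_cpow_log (z n i) (p n i)).const_smul (a n i) |>.congr fun t _ => by
      simp [smul_eq_mul]; ring
  -- (F1) identity on the half-plane re s > A0 n
  have heq : ∀ n (s : ℂ), A0 n < s.re →
      (∫ t in Ioc (0:ℝ) 1, f t * (t : ℂ) ^ (s - 1)) = Gf n s := by
    intro n s hs
    have hs1 : 1 < s.re := lt_of_le_of_lt (hA0 n) hs
    -- integrability of the summand terms
    have hterm_int : ∀ i : Fin (m n),
        IntegrableOn (fun t : ℝ => (t : ℂ) ^ ((s + z n i) - 1) * ((Real.log t : ℂ)) ^ (p n i))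
          (Ioc 0 1) := fun i => integrableOn_cpow_log (hzre n i s hs) (p n i)
    -- integrability of the remainder term
    have hrem_int : IntegrableOn (fun t : ℝ => (t : ℂ) ^ (s - 1) * h n t) (Ioc 0 1) := by
      have hcont_int : ContinuousOn (fun t : ℝ => (t : ℂ) ^ (s - 1) * h n t) (Ioi 0) := by
        apply ContinuousOn.mul _ (hcont_h n)
        intro t ht
        exact (Complex.continuousAt_ofReal_cpow_const t (s-1)
          (Or.inr (ne_of_gt ht))).continuousWithinAt
      apply integrable_aux (c := C n) (N := s.re + n)
      · exact (hcont_int.mono Ioc_subset_Ioi_self).aestronglyMeasurable measurableSet_Ioc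
      · linarith
      · intro t ht
        rw [norm_mul]
        have e1 : ‖(t : ℂ) ^ (s - 1)‖ = t ^ (s.re - 1) := by
          rw [Complex.norm_cpow_eq_rpow_re_of_pos ht.1]
          simp
        rw [e1]
        calc t ^ (s.re - 1) * ‖h n t‖ ≤ t ^ (s.re - 1) * (C n * t ^ (n + 1 : ℝ)) :=
              mul_le_mul_of_nonneg_left (hb n t ht) (Real.rpow_nonneg ht.1.le _)
          _ = C n * t ^ (s.re + n) := by
              have e2 : t ^ (s.re - 1) * (C n * t ^ ((n:ℝ) + 1))
                  = C n * (t ^ ((n:ℝ) + 1) * t ^ (s.re - 1)) := by ring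
              rw [e2, ← Real.rpow_add ht.1]
              congr 1
              ring
    -- pointwise decomposition on Ioc 0 1
    have hdecomp : ∀ t ∈ Ioc (0:ℝ) 1, f t * (t : ℂ) ^ (s - 1)
        = (∑ i, a n i * ((t : ℂ) ^ ((s + z n i) - 1) * ((Real.log t : ℂ)) ^ (p n i)))
          + (t : ℂ) ^ (s - 1) * h n t := by
      intro t ht
      have ht0 : (t : ℂ) ≠ 0 := by exact_mod_cast ht.1.ne'
      rw [hh]
      simp only
      rw [mul_sub]
      have : (t : ℂ) ^ (s - 1) * ∑ i, a n i * (t : ℂ) ^ (z n i) * ((Real.log t : ℂ)) ^ (p n i)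
          = ∑ i, a n i * ((t : ℂ) ^ ((s + z n i) - 1) * ((Real.log t : ℂ)) ^ (p n i)) := by
        rw [Finset.mul_sum]
        apply Finset.sum_congr rfl
        intro i _
        have : (t : ℂ) ^ ((s + z n i) - 1) = (t : ℂ) ^ (s - 1) * (t : ℂ) ^ (z n i) := by
          rw [← Complex.cpow_add _ _ ht0]
          ring_nf
        rw [this]
        ring
      rw [this]
      ring
    rw [setIntegral_congr_fun measurableSet_Ioc hdecomp]
    rw [integral_add (integrable_finset_sum _ fun i _ => (hterm_int i).const_mul (a n i)) hrem_int]
    rw [integral_finset_sum _ fun i _ => (hterm_int i).const_mul (a n i)]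
    rw [hGf]
    simp only
    congr 1
    · rw [hRt]
      apply Finset.sum_congr rfl
      intro i _
      rw [MeasureTheory.integral_const_mul, cpow_log_integral_formula (hzre n i s hs)]
    · rw [mellin_indicator_eq]
  -- (F2) meromorphy of Gf n on the half-plane re s > -(n+1)
  have hmer : ∀ n, MeromorphicOn (Gf n) {s : ℂ | -((n:ℝ)+1) < s.re} := by
    intro n
    apply MeromorphicOn.add
    · exact (meromorphicOn_ratl_sum (a n) (z n) (p n)).mono_set (subset_univ _)
    · exact ((mellin_remainder_analytic (hcont_h n) (by positivity : (0:ℝ) < (n:ℝ)+1)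
        (fun t ht => hb n t ht)).meromorphicOn)
  -- (F3) coherence
  have hcoh : ∀ (n k : ℕ) (x : ℂ), -((min n k : ℝ) + 1) < x.re → Gf n =ᶠ[𝓝[≠] x] Gf k := by
    intro n k x hx
    have hsub1 : {s : ℂ | -((min n k : ℝ) + 1) < s.re} ⊆ {s : ℂ | -((n:ℝ)+1) < s.re} := by
      intro s hs
      simp only [mem_setOf] at hs ⊢
      have : (min n k : ℝ) ≤ n := by exact_mod_cast Nat.cast_le.2 (min_le_left n k)
      linarith
    have hsub2 : {s : ℂ | -((min n k : ℝ) + 1) < s.re} ⊆ {s : ℂ | -((k:ℝ)+1) < s.re} := by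
      intro s hs
      simp only [mem_setOf] at hs ⊢
      have : (min n k : ℝ) ≤ k := by exact_mod_cast Nat.cast_le.2 (min_le_right n k)
      linarith
    apply meromorphic_eq_on_punctured
      (isOpen_lt continuous_const Complex.continuous_re)
      (convex_halfSpace_re_gt _).isPreconnected
      ((hmer n).mono_set hsub1) ((hmer k).mono_set hsub2)
      (isOpen_lt continuous_const Complex.continuous_re)
      (V := {s : ℂ | max (A0 n) (A0 k) < s.re}) ?_ ?_ ?_ x hx
    · exact ⟨((max (A0 n) (A0 k) + 1 : ℝ) : ℂ),
        by simp only [mem_setOf_eq, Complex.ofReal_re]; exact lt_add_one _⟩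
    · intro s hs
      simp only [mem_setOf] at hs ⊢
      have h1 : (1:ℝ) ≤ max (A0 n) (A0 k) := le_trans (hA0 n) (le_max_left _ _)
      have h2 : (0:ℝ) ≤ (min n k : ℝ) := by positivity
      linarith
    · intro s hs
      simp only [mem_setOf] at hs
      rw [← heq n s (lt_of_le_of_lt (le_max_left _ _) hs),
        ← heq k s (lt_of_le_of_lt (le_max_right _ _) hs)]
  -- glue
  set nn : ℂ → ℕ := fun s => ⌈-s.re⌉₊ with hnn_def
  set Z : ℂ → ℂ := fun s => Gf (nn s) s with hZ
  have hnn : ∀ s : ℂ, -((nn s : ℝ) + 1) < s.re := by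
    intro s
    have := Nat.le_ceil (-s.re)
    rw [hnn_def]
    simp only
    linarith
  refine ⟨A0 0, Z, hA0 0, ?_, ?_⟩
  · -- meromorphy
    intro x _
    set K := nn x with hK
    have hGK : MeromorphicAt (Gf K) x := hmer K x (hnn x)
    apply hGK.congr
    have hj : ∀ j ∈ Finset.range (K+2), ∀ᶠ s in 𝓝[≠] x,
        (-((min j K : ℝ) + 1) < x.re → Gf j s = Gf K s) := by
      intro j _
      by_cases hcase : -((min j K : ℝ) + 1) < x.re
      · filter_upwards [hcoh j K x hcase] with s hs
        exact fun _ => hs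
      · exact Filter.Eventually.of_forall fun s hcas => absurd hcas hcase
    have hall := (Filter.eventually_all_finset (Finset.range (K+2))).2 hj
    have hball : Metric.ball x (1/4) ∈ 𝓝[≠] x :=
      mem_nhdsWithin_of_mem_nhds (Metric.ball_mem_nhds x (by norm_num))
    filter_upwards [hall, hball] with s hs hsball
    have hre : |s.re - x.re| < 1/4 := by
      have h1 : |(s - x).re| ≤ ‖s - x‖ := Complex.abs_re_le_norm _
      have h2 : ‖s - x‖ < 1/4 := by
        rw [Metric.mem_ball, Complex.dist_eq] at hsball
        exact hsball
      rw [Complex.sub_re] at h1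
      linarith
    have hxK : -x.re ≤ (K : ℝ) := by
      rw [hK, hnn_def]
      exact Nat.le_ceil _
    have hsj : -s.re ≤ (nn s : ℝ) := Nat.le_ceil _
    have hjle : nn s ≤ K + 1 := by
      rw [hnn_def]
      apply Nat.ceil_le.2
      have : s.re - x.re > -(1/4 : ℝ) := by
        have := abs_lt.1 hre
        linarith [this.1]
      push_cast
      linarith
    have hjmem : nn s ∈ Finset.range (K+2) := Finset.mem_range.2 (by omega)
    have hcond : -((min (nn s) K : ℝ) + 1) < x.re := by
      have hb1 : -((nn s : ℝ) + 1) < x.re := by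
        have h1 : -s.re ≤ (nn s : ℝ) := hsj
        have := abs_lt.1 hre
        linarith [this.2]
      have hb2 : -((K : ℝ) + 1) < x.re := by linarith
      rcases le_total ((nn s : ℝ)) ((K : ℝ)) with hmin | hmin
      · rw [min_eq_left hmin]; exact hb1
      · rw [min_eq_right hmin]; exact hb2
    exact ((hs (nn s) hjmem) hcond).symm
  · -- value on the half-plane
    intro s hs
    have hnn0 : nn s = 0 := by
      rw [hnn_def]
      apply Nat.ceil_eq_zero.2
      have := hA0 0
      linarith
    rw [hZ]
    simp only
    rw [hnn0]
    exact (heq 0 s hs).symm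

lemma integral_inv_subst (F : ℝ → ℂ) (s : ℂ) :
    ∫ t in Ioi (1:ℝ), F t * (t : ℂ) ^ (s - 1)
      = ∫ u in Ioc (0:ℝ) 1, F u⁻¹ * (u : ℂ) ^ ((-s) - 1) := by
  set G : ℝ → ℂ := fun t => F t * (t : ℂ) ^ (s - 1) with hG
  have key := integral_comp_rpow_Ioi ((Ioi (1:ℝ)).indicator G) (p := -1) (by norm_num)
  have hRHS : (∫ y in Ioi (0:ℝ), (Ioi (1:ℝ)).indicator G y) = ∫ t in Ioi (1:ℝ), G t := by
    rw [setIntegral_indicator measurableSet_Ioi]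
    rw [show Ioi (0:ℝ) ∩ Ioi 1 = Ioi 1 from
      inter_eq_right.2 fun x hx => show (0:ℝ) < x from lt_trans one_pos hx]
  have hLHS : (∫ x in Ioi (0:ℝ), (|(-1:ℝ)| * x ^ ((-1:ℝ) - 1)) • (Ioi (1:ℝ)).indicator G (x ^ (-1:ℝ)))
      = ∫ u in Ioc (0:ℝ) 1, F u⁻¹ * (u : ℂ) ^ ((-s) - 1) := by
    have e1 : EqOn (fun x : ℝ => (|(-1:ℝ)| * x ^ ((-1:ℝ) - 1)) • (Ioi (1:ℝ)).indicator G (x ^ (-1:ℝ)))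
        ((Ioo (0:ℝ) 1).indicator (fun x : ℝ => F x⁻¹ * (x : ℂ) ^ ((-s) - 1))) (Ioi 0) := by
      intro x hx
      have hx0 : (0:ℝ) < x := hx
      have hxinv : x ^ (-1:ℝ) = x⁻¹ := by
        rw [Real.rpow_neg_one]
      simp only [hxinv]
      have hval : x ∈ Ioo (0:ℝ) 1 → ((|(-1:ℝ)| * x ^ ((-1:ℝ) - 1)) • G x⁻¹)
          = F x⁻¹ * (x : ℂ) ^ ((-s) - 1) := by
        intro hxm
        rw [hG]
        simp only [abs_neg, abs_one, one_mul]
        have hc1 : ((x⁻¹ : ℝ) : ℂ) = ((x : ℂ))⁻¹ := by push_cast; ring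
        have harg : ((x:ℂ)).arg ≠ Real.pi := by
          rw [Complex.arg_ofReal_of_nonneg hx0.le]
          exact Ne.symm Real.pi_ne_zero
        have hc2 : ((x⁻¹ : ℝ) : ℂ) ^ (s - 1) = ((x : ℂ)) ^ (1 - s) := by
          rw [hc1, Complex.inv_cpow _ _ harg, ← Complex.cpow_neg]
          congr 1; ring
        have hx0c : ((x:ℂ)) ≠ 0 := by exact_mod_cast hx0.ne'
        have hc3 : ((x ^ ((-1:ℝ) - 1) : ℝ) : ℂ) = ((x:ℂ)) ^ ((-2 : ℂ)) := by
          rw [Complex.ofReal_cpow hx0.le]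
          norm_num
        rw [real_smul, hc3, hc2]
        rw [show ((x:ℂ)) ^ ((-2:ℂ)) * (F x⁻¹ * (x:ℂ) ^ (1 - s))
            = F x⁻¹ * ((x:ℂ) ^ ((-2:ℂ)) * (x:ℂ) ^ (1 - s)) by ring,
          ← Complex.cpow_add _ _ hx0c]
        congr 2
        ring
      rcases lt_or_ge x 1 with hx1 | hx1
      · have hmem : x⁻¹ ∈ Ioi (1:ℝ) := by
          rw [mem_Ioi]
          exact (one_lt_inv₀ hx0).2 hx1
        have hmem' : x ∈ Ioo (0:ℝ) 1 := ⟨hx0, hx1⟩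
        rw [indicator_of_mem hmem, indicator_of_mem hmem']
        exact hval hmem'
      · have hnmem : x⁻¹ ∉ Ioi (1:ℝ) := by
          rw [mem_Ioi, not_lt]
          exact inv_le_one_of_one_le₀ hx1
        have hnmem' : x ∉ Ioo (0:ℝ) 1 := fun hm => absurd hm.2 (not_lt.2 hx1)
        rw [indicator_of_notMem hnmem, indicator_of_notMem hnmem', smul_zero]
    rw [setIntegral_congr_fun measurableSet_Ioi e1,
      setIntegral_indicator measurableSet_Ioo]
    have : Ioi (0:ℝ) ∩ Ioo 0 1 = Ioo 0 1 := by
      rw [inter_eq_right]; exact fun x hx => hx.1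
    rw [this, ← integral_Ioc_eq_integral_Ioo]
  rw [← hRHS, ← key, hLHS]

/-- If `f : (0,∞) → ℂ` is continuous and admits polyhomogeneous asymptotic expansions
(in powers `t^z (log t)^p`) at `t = 0` and (in powers `t^(-w) (log t)^q`) at `t = ∞`,
then there are `A ∈ ℝ` and functions `Z₀, Zinf` meromorphic on all of `ℂ` with
`Z₀ s = ∫_0^1 f(t) t^(s-1) dt` for `Re s > A` and `Zinf s = ∫_1^∞ f(t) t^(s-1) dt`
for `Re s < -A`. -/
theorem renormalized_zeta_meromorphic_continuation (f : ℝ → ℂ)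
    (hf : ContinuousOn f (Ioi 0))
    (hzero : ∀ N : ℝ, 0 < N → ∃ (m : ℕ) (a : Fin m → ℂ) (z : Fin m → ℂ)
      (p : Fin m → ℕ) (C : ℝ), 0 < C ∧ ∀ t ∈ Ioc (0 : ℝ) 1,
        ‖f t - ∑ i, a i * (t : ℂ) ^ (z i) * ((Real.log t : ℂ)) ^ (p i)‖ ≤ C * t ^ N)
    (hinf : ∀ N : ℝ, 0 < N → ∃ (l : ℕ) (b : Fin l → ℂ) (w : Fin l → ℂ)
      (q : Fin l → ℕ) (C' : ℝ), 0 < C' ∧ ∀ t ∈ Ici (1 : ℝ),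
        ‖f t - ∑ j, b j * (t : ℂ) ^ (-(w j)) * ((Real.log t : ℂ)) ^ (q j)‖ ≤ C' * t ^ (-N)) :
    ∃ (A : ℝ) (Z₀ Zinf : ℂ → ℂ),
      MeromorphicOn Z₀ (Set.univ : Set ℂ) ∧
      MeromorphicOn Zinf (Set.univ : Set ℂ) ∧
      (∀ s : ℂ, A < s.re →
        Z₀ s = ∫ t in Ioc (0 : ℝ) 1, f t * (t : ℂ) ^ (s - 1)) ∧
      (∀ s : ℂ, s.re < -A →
        Zinf s = ∫ t in Ioi (1 : ℝ), f t * (t : ℂ) ^ (s - 1)) := by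
  obtain ⟨Af, Z₀, hAf1, hZ₀mer, hZ₀eq⟩ := mellin_zero_side f hf hzero
  -- the function at infinity, after inversion
  set g : ℝ → ℂ := fun u => f u⁻¹ with hgdef
  have hgcont : ContinuousOn g (Ioi 0) := by
    apply hf.comp (continuousOn_inv₀.mono ?_) ?_
    · intro x hx; exact ne_of_gt hx
    · intro x hx; exact mem_Ioi.2 (inv_pos.2 (mem_Ioi.1 hx))
  have hgzero : ∀ N : ℝ, 0 < N → ∃ (m : ℕ) (a : Fin m → ℂ) (z : Fin m → ℂ)
      (p : Fin m → ℕ) (C : ℝ), 0 < C ∧ ∀ t ∈ Ioc (0 : ℝ) 1,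
        ‖g t - ∑ i, a i * (t : ℂ) ^ (z i) * ((Real.log t : ℂ)) ^ (p i)‖ ≤ C * t ^ N := by
    intro N hN
    obtain ⟨l, b, w, q, C', hC', hbd⟩ := hinf N hN
    refine ⟨l, fun j => b j * (-1 : ℂ) ^ (q j), w, q, C', hC', ?_⟩
    intro u hu
    obtain ⟨hu0, hu1⟩ := hu
    have huinv : u⁻¹ ∈ Ici (1:ℝ) := (one_le_inv₀ hu0).2 hu1
    have h1 := hbd u⁻¹ huinv
    have hc1 : ((u⁻¹ : ℝ) : ℂ) = ((u : ℂ))⁻¹ := by push_cast; ring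
    have harg : ((u:ℂ)).arg ≠ Real.pi := by
      rw [Complex.arg_ofReal_of_nonneg hu0.le]
      exact Ne.symm Real.pi_ne_zero
    have hterm : ∀ j, ((u⁻¹ : ℝ) : ℂ) ^ (-(w j)) = (u : ℂ) ^ (w j) := by
      intro j
      rw [hc1, Complex.inv_cpow _ _ harg, ← Complex.cpow_neg, neg_neg]
    have hlog : ((Real.log u⁻¹ : ℂ)) = -((Real.log u : ℂ)) := by
      rw [Real.log_inv]; push_cast; ring
    have hsum : (∑ j, b j * ((u⁻¹ : ℝ) : ℂ) ^ (-(w j)) * ((Real.log u⁻¹ : ℂ)) ^ (q j))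
        = ∑ j, (b j * (-1 : ℂ) ^ (q j)) * (u : ℂ) ^ (w j) * ((Real.log u : ℂ)) ^ (q j) := by
      apply Finset.sum_congr rfl
      intro j _
      rw [hterm j, hlog, neg_pow]
      ring
    have hpow : (u⁻¹ : ℝ) ^ (-N) = u ^ N := by
      rw [Real.inv_rpow hu0.le, Real.rpow_neg hu0.le, inv_inv]
    rw [hgdef]
    simp only
    rw [← hsum, ← hpow]
    exact h1
  obtain ⟨Ag, Zg, hAg1, hZgmer, hZgeq⟩ := mellin_zero_side g hgcont hgzero
  refine ⟨max Af Ag, Z₀, fun s => Zg (-s), hZ₀mer, meromorphicOn_comp_neg hZgmer, ?_, ?_⟩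
  · intro s hs
    exact hZ₀eq s (lt_of_le_of_lt (le_max_left _ _) hs)
  · intro s hs
    show Zg (-s) = _
    have h1 : Ag < (-s).re := by
      rw [Complex.neg_re]
      have := lt_of_le_of_lt (le_max_right Af Ag) (by linarith : max Af Ag < -s.re)
      linarith
    rw [hZgeq (-s) h1, integral_inv_subst f s]
end

section
/- Let n ≥ 1 be an integer, let f_0,…,f_{n−1}, f_log, P ∈ ℝ, and let F : (0,1) → ℝ be of the form F(δ) = Σ_{k=0}^{n−1} f_k δ^{k−n} + f_log · log δ + P + R(δ), where R is continuous and R(δ) → 0 as δ → 0^+. Let χ : (0,∞) → ℝ be continuously differentiable, non-increasing, with χ ≡ 1 on (0,1/2] and χ ≡ 0 on [2,∞). Define G(δ) = −∫_{1/2}^{2} χ'(u) F(δ/u) du for δ ∈ (0,1/4). Then G(δ) = Σ_{k=0}^{n−1} l_k f_k δ^{k−n} + f_log · log δ + (P + c_χ f_log) + R̃(δ), where l_k = −∫_{1/2}^{2} χ'(u) u^{n−k} du, c_χ = ∫_{1/2}^{2} χ'(u) log u du, and R̃(δ) → 0 as δ → 0^+. -/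
open MeasureTheory Set Filter

set_option maxHeartbeats 2000000

/-- Smooth versus sharp cutoff (Lemma 3.9): if
`F δ = Σ_{k<n} f_k δ^(k-n) + f_log log δ + P + R δ` with `R` continuous and `R → 0`
as `δ → 0⁺`, and `χ` is a `C¹` non-increasing cutoff (`≡ 1` on `(0,1/2]`, `≡ 0` on
`[2,∞)`), then `G δ = -∫_{1/2}^2 χ'(u) F(δ/u) du` has the expansion
`Σ_{k<n} l_k f_k δ^(k-n) + f_log log δ + (P + c_χ f_log) + R̃ δ` with `R̃ → 0`,
where `l_k = -∫_{1/2}^2 χ'(u) u^(n-k) du` and `c_χ = ∫_{1/2}^2 χ'(u) log u du`. -/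
theorem smooth_vs_sharp_cutoff (n : ℕ) (hn : 1 ≤ n) (f : ℕ → ℝ) (flog P : ℝ)
    (F R : ℝ → ℝ) (hRcont : ContinuousOn R (Ioo 0 1))
    (hR : Filter.Tendsto R (nhdsWithin 0 (Ioi 0)) (nhds 0))
    (hF : ∀ δ ∈ Ioo (0 : ℝ) 1,
      F δ = ∑ k ∈ Finset.range n, f k * δ ^ ((k : ℝ) - n) + flog * Real.log δ + P + R δ)
    (χ : ℝ → ℝ) (hχ : ContDiffOn ℝ 1 χ (Ioi 0)) (hmono : AntitoneOn χ (Ioi 0))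
    (hχ1 : ∀ u ∈ Ioc (0 : ℝ) (1 / 2), χ u = 1) (hχ0 : ∀ u ∈ Ici (2 : ℝ), χ u = 0)
    (G : ℝ → ℝ)
    (hG : ∀ δ ∈ Ioo (0 : ℝ) (1 / 4), G δ = -∫ u in (1 / 2 : ℝ)..2, deriv χ u * F (δ / u)) :
    ∃ Rt : ℝ → ℝ,
      (∀ δ ∈ Ioo (0 : ℝ) (1 / 4),
        G δ = ∑ k ∈ Finset.range n,
            (-∫ u in (1 / 2 : ℝ)..2, deriv χ u * u ^ (n - k)) * f k * δ ^ ((k : ℝ) - n)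
          + flog * Real.log δ
          + (P + (∫ u in (1 / 2 : ℝ)..2, deriv χ u * Real.log u) * flog)
          + Rt δ) ∧
      Filter.Tendsto Rt (nhdsWithin 0 (Ioi 0)) (nhds 0) := by
  have hsub : Icc (1/2 : ℝ) 2 ⊆ Ioi 0 := fun x hx => lt_of_lt_of_le (by norm_num) hx.1
  have huIcc : uIcc (1/2 : ℝ) 2 = Icc (1/2 : ℝ) 2 := uIcc_of_le (by norm_num)
  have hχ'cont : ContinuousOn (deriv χ) (Icc (1/2 : ℝ) 2) :=
    (hχ.continuousOn_deriv_of_isOpen isOpen_Ioi le_rfl).mono hsub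
  -- integrability of the various pieces
  have hint0 : IntervalIntegrable (deriv χ) volume (1/2 : ℝ) 2 :=
    (huIcc ▸ hχ'cont).intervalIntegrable
  have hintk : ∀ k : ℕ, IntervalIntegrable (fun u => deriv χ u * u ^ (n - k)) volume (1/2 : ℝ) 2 := by
    intro k
    exact ((huIcc ▸ hχ'cont).mul ((continuous_pow _).continuousOn)).intervalIntegrable
  have hlogcont : ContinuousOn (fun u : ℝ => Real.log u) (Icc (1/2 : ℝ) 2) := by
    intro x hx
    exact (Real.continuousAt_log (by have := hx.1; nlinarith)).continuousWithinAt
  have hintlog : IntervalIntegrable (fun u => deriv χ u * Real.log u) volume (1/2 : ℝ) 2 :=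
    ((huIcc ▸ hχ'cont).mul (huIcc ▸ hlogcont)).intervalIntegrable
  have hRcomp : ∀ δ ∈ Ioo (0:ℝ) (1/2), ContinuousOn (fun u => R (δ / u)) (Icc (1/2 : ℝ) 2) := by
    intro δ hδ
    apply hRcont.comp
    · apply ContinuousOn.div continuousOn_const continuousOn_id
      intro x hx h
      rw [id_eq] at h
      have := hx.1; rw [h] at this; norm_num at this
    · intro x hx
      constructor
      · exact div_pos hδ.1 (hsub hx)
      · rw [div_lt_one (hsub hx)]
        exact lt_of_lt_of_le hδ.2 hx.1
  have hintR : ∀ δ ∈ Ioo (0:ℝ) (1/2),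
      IntervalIntegrable (fun u => deriv χ u * R (δ / u)) volume (1/2 : ℝ) 2 := by
    intro δ hδ
    exact ((huIcc ▸ hχ'cont).mul (huIcc ▸ hRcomp δ hδ)).intervalIntegrable
  -- integral of deriv χ
  have hI0 : (∫ u in (1/2 : ℝ)..2, deriv χ u) = -1 := by
    rw [intervalIntegral.integral_deriv_eq_sub (fun x hx =>
      (hχ.contDiffAt (isOpen_Ioi.mem_nhds (hsub (huIcc ▸ hx)))).differentiableAt one_ne_zero) hint0]
    rw [hχ0 2 (by norm_num), hχ1 (1/2) ⟨by norm_num, le_rfl⟩]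
    norm_num
  refine ⟨fun δ => -∫ u in (1/2 : ℝ)..2, deriv χ u * R (δ / u), fun δ hδ => ?_, ?_⟩
  · -- the expansion
    obtain ⟨hδ0, hδ4⟩ := hδ
    have hδ2 : δ ∈ Ioo (0:ℝ) (1/2) := ⟨hδ0, by linarith⟩
    have hcong : EqOn (fun u => deriv χ u * F (δ / u))
        (fun u => (∑ k ∈ Finset.range n, f k * δ ^ ((k : ℝ) - n) * (deriv χ u * u ^ (n - k)))
          + ((flog * Real.log δ + P) * deriv χ u
          + ((-flog) * (deriv χ u * Real.log u) + deriv χ u * R (δ / u))))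
        (uIcc (1/2 : ℝ) 2) := by
      intro u hu
      rw [huIcc] at hu
      have hu0 : (0:ℝ) < u := hsub hu
      have hδu : δ / u ∈ Ioo (0:ℝ) 1 := by
        constructor
        · exact div_pos hδ0 hu0
        · rw [div_lt_one hu0]; exact lt_of_lt_of_le hδ2.2 hu.1
      simp only
      rw [hF _ hδu, Real.log_div hδ0.ne' hu0.ne']
      have hs : ∑ k ∈ Finset.range n, f k * (δ / u) ^ ((k : ℝ) - n)
          = ∑ k ∈ Finset.range n, f k * δ ^ ((k : ℝ) - n) * u ^ (n - k) := by
        refine Finset.sum_congr rfl (fun k hk => ?_)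
        have hkn : k ≤ n := (Finset.mem_range.mp hk).le
        have : (δ / u) ^ ((k : ℝ) - n) = δ ^ ((k : ℝ) - n) * u ^ (n - k) := by
          rw [Real.div_rpow hδ0.le hu0.le, div_eq_mul_inv, ← Real.rpow_neg hu0.le, neg_sub]
          congr 1
          rw [← Real.rpow_natCast u (n - k)]
          congr 1
          push_cast [Nat.cast_sub hkn]
          ring
        rw [this]; ring
      rw [hs, mul_add, mul_add, mul_add, Finset.mul_sum]
      rw [Finset.sum_congr rfl (fun k _ => show deriv χ u * (f k * δ ^ ((k : ℝ) - n) * u ^ (n - k))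
        = f k * δ ^ ((k : ℝ) - n) * (deriv χ u * u ^ (n - k)) by ring)]
      ring
    have hsumint : IntervalIntegrable
        (fun u => ∑ k ∈ Finset.range n, f k * δ ^ ((k : ℝ) - n) * (deriv χ u * u ^ (n - k)))
        volume (1/2 : ℝ) 2 := by
      apply ContinuousOn.intervalIntegrable
      rw [huIcc]
      apply continuousOn_finset_sum
      intro k _
      exact continuousOn_const.mul (hχ'cont.mul (continuous_pow _).continuousOn)
    have hsplit : (∫ u in (1/2 : ℝ)..2, deriv χ u * F (δ / u))
        = (∑ k ∈ Finset.range n, f k * δ ^ ((k : ℝ) - n)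
            * ∫ u in (1/2 : ℝ)..2, deriv χ u * u ^ (n - k))
          + ((flog * Real.log δ + P) * (-1)
          + ((-flog) * (∫ u in (1/2 : ℝ)..2, deriv χ u * Real.log u)
            + ∫ u in (1/2 : ℝ)..2, deriv χ u * R (δ / u))) := by
      rw [intervalIntegral.integral_congr hcong]
      rw [intervalIntegral.integral_add hsumint
        ((hint0.const_mul _).add ((hintlog.const_mul _).add (hintR δ hδ2)))]
      rw [intervalIntegral.integral_add (hint0.const_mul _)
        ((hintlog.const_mul _).add (hintR δ hδ2))]
      rw [intervalIntegral.integral_add (hintlog.const_mul _) (hintR δ hδ2)]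
      rw [intervalIntegral.integral_finset_sum (fun k (_ : k ∈ Finset.range n) => (hintk k).const_mul (f k * δ ^ ((k : ℝ) - n)))]
      rw [intervalIntegral.integral_const_mul, intervalIntegral.integral_const_mul, hI0]
      congr 1
      exact Finset.sum_congr rfl (fun k _ => intervalIntegral.integral_const_mul _ _)
    rw [hG δ ⟨hδ0, hδ4⟩, hsplit]
    have hsum : ∑ k ∈ Finset.range n,
        (-∫ u in (1/2 : ℝ)..2, deriv χ u * u ^ (n - k)) * f k * δ ^ ((k : ℝ) - n)
        = -∑ k ∈ Finset.range n, f k * δ ^ ((k : ℝ) - n)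
            * ∫ u in (1/2 : ℝ)..2, deriv χ u * u ^ (n - k) := by
      rw [← Finset.sum_neg_distrib]
      exact Finset.sum_congr rfl (fun k _ => by ring)
    rw [hsum]
    ring
  · -- the remainder tends to 0
    obtain ⟨M, hM⟩ := (isCompact_Icc : IsCompact (Icc (1/2 : ℝ) 2)).exists_bound_of_continuousOn
      hχ'cont
    have hM0 : 0 ≤ M := le_trans (norm_nonneg _) (hM 1 ⟨by norm_num, by norm_num⟩)
    rw [Metric.tendsto_nhdsWithin_nhds] at hR ⊢
    intro ε hε
    have hε' : 0 < ε / (2 * (M + 1)) := by positivity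
    obtain ⟨d, hd0, hd⟩ := hR _ hε'
    refine ⟨min (d / 2) (1 / 2), by positivity, fun x hx hxd => ?_⟩
    have hx0 : 0 < x := hx
    rw [Real.dist_eq, sub_zero, abs_of_pos hx0] at hxd
    have hxd2 : x < d / 2 := lt_of_lt_of_le hxd (min_le_left _ _)
    have hbound : ∀ u ∈ uIoc (1/2 : ℝ) 2, ‖deriv χ u * R (x / u)‖ ≤ M * (ε / (2 * (M + 1))) := by
      intro u hu
      rw [uIoc_of_le (by norm_num : (1/2:ℝ) ≤ 2)] at hu
      have hu0 : (0:ℝ) < u := lt_trans (by norm_num) hu.1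
      have hxu : dist (x / u) 0 < d := by
        rw [Real.dist_eq, sub_zero, abs_of_pos (div_pos hx0 hu0)]
        have : x / u < 2 * x := by
          rw [div_lt_iff₀ hu0]
          nlinarith [hu.1]
        linarith
      have hRb := hd (mem_Ioi.mpr (div_pos hx0 hu0)) hxu
      rw [Real.dist_eq, sub_zero] at hRb
      rw [norm_mul]
      refine mul_le_mul (hM u ⟨hu.1.le, hu.2⟩) ?_ (norm_nonneg _) hM0
      rw [Real.norm_eq_abs]
      exact hRb.le
    have hnorm := intervalIntegral.norm_integral_le_of_norm_le_const hbound
    rw [Real.dist_eq, sub_zero]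
    have : |(-∫ u in (1/2 : ℝ)..2, deriv χ u * R (x / u))|
        = ‖∫ u in (1/2 : ℝ)..2, deriv χ u * R (x / u)‖ := by
      rw [abs_neg]; rfl
    rw [this]
    have h2 : M * (ε / (2 * (M + 1))) * |(2:ℝ) - 1/2| < ε := by
      rw [show |(2:ℝ) - 1/2| = 3/2 by norm_num]
      have hMlt : M * (ε / (2 * (M + 1))) ≤ (M + 1) * (ε / (2 * (M + 1))) := by
        apply mul_le_mul_of_nonneg_right (by linarith) (le_of_lt hε')
      have heq : (M + 1) * (ε / (2 * (M + 1))) = ε / 2 := by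
        field_simp
      nlinarith
    exact lt_of_le_of_lt hnorm h2
end
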